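/- Suppose S ⊆ ℝ^n is a compact set with dim_F(S) < n. Then dim_F(S × ℝ^m) = dim_F(S), where S × ℝ^m ⊆ ℝ^{n+m}. -/

import Mathlib

open MeasureTheory Real Set

/-- The Fourier transform of a measure on `ℝ^n`:  `μ̂(ξ) = ∫ e^{−2πi x·ξ} dμ(x)`. -/
noncomputable def mft {n : ℕ} (μ : Measure (EuclideanSpace ℝ (Fin n)))
    (ξ : EuclideanSpace ℝ (Fin n)) : ℂ :=
  ∫ x, Complex.exp (((-2 * Real.pi * inner ℝ x ξ : ℝ) : ℂ) * Complex.I) ∂μ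

/-- The Fourier dimension of a set `A ⊆ ℝ^n`. -/
noncomputable def fourierDim {n : ℕ} (A : Set (EuclideanSpace ℝ (Fin n))) : ℝ :=
  sSup {s : ℝ | 0 ≤ s ∧ s ≤ (n : ℝ) ∧
    ∃ μ : Measure (EuclideanSpace ℝ (Fin n)), IsFiniteMeasure μ ∧ μ ≠ 0 ∧ μ Aᶜ = 0 ∧
      ∃ C : ℝ, ∀ ξ : EuclideanSpace ℝ (Fin n), ‖ξ‖ ^ (s / 2) * ‖mft μ ξ‖ ≤ C}

/-- The canonical identification of `ℝ^n × ℝ^m` with `ℝ^{n+m}`. -/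
noncomputable def prodMap (n m : ℕ)
    (p : EuclideanSpace ℝ (Fin n) × EuclideanSpace ℝ (Fin m)) :
    EuclideanSpace ℝ (Fin (n + m)) :=
  (EuclideanSpace.equiv (Fin (n + m)) ℝ).symm
    (Fin.append (EuclideanSpace.equiv (Fin n) ℝ p.1) (EuclideanSpace.equiv (Fin m) ℝ p.2))

/-! ### Auxiliary definitions and lemmas -/

/-- The defining set of the Fourier dimension. -/
def Tset {n : ℕ} (A : Set (EuclideanSpace ℝ (Fin n))) : Set ℝ :=
  {s : ℝ | 0 ≤ s ∧ s ≤ (n : ℝ) ∧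
    ∃ μ : Measure (EuclideanSpace ℝ (Fin n)), IsFiniteMeasure μ ∧ μ ≠ 0 ∧ μ Aᶜ = 0 ∧
      ∃ C : ℝ, ∀ ξ : EuclideanSpace ℝ (Fin n), ‖ξ‖ ^ (s / 2) * ‖mft μ ξ‖ ≤ C}

lemma fourierDim_eq {n : ℕ} (A : Set (EuclideanSpace ℝ (Fin n))) :
    fourierDim A = sSup (Tset A) := rfl

lemma Tset_bddAbove {n : ℕ} (A : Set (EuclideanSpace ℝ (Fin n))) :
    BddAbove (Tset A) := ⟨(n : ℝ), fun _ hs => hs.2.1⟩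

lemma mft_kernel_cont {d : ℕ} (ξ : EuclideanSpace ℝ (Fin d)) :
    Continuous fun x : EuclideanSpace ℝ (Fin d) =>
      Complex.exp (((-2 * Real.pi * inner ℝ x ξ : ℝ) : ℂ) * Complex.I) := by
  refine Complex.continuous_exp.comp (Continuous.mul ?_ continuous_const)
  exact Complex.continuous_ofReal.comp
    (continuous_const.mul (continuous_inner.comp (continuous_id.prodMk continuous_const)))

lemma mft_abs_le {d : ℕ} (μ : Measure (EuclideanSpace ℝ (Fin d))) [IsFiniteMeasure μ]
    (ξ : EuclideanSpace ℝ (Fin d)) :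
    ‖mft μ ξ‖ ≤ (μ Set.univ).toReal := by
  have h : ∀ x : EuclideanSpace ℝ (Fin d),
      ‖Complex.exp (((-2 * Real.pi * inner ℝ x ξ : ℝ) : ℂ) * Complex.I)‖ ≤ 1 := by
    intro x
    simp [Complex.norm_exp]
  calc ‖mft μ ξ‖ = ‖mft μ ξ‖ := rfl
  _ ≤ 1 * (μ Set.univ).toReal :=
      norm_integral_le_of_norm_le_const (Filter.Eventually.of_forall h)
  _ = _ := one_mul _

lemma decay_mono {d : ℕ} (μ : Measure (EuclideanSpace ℝ (Fin d))) [IsFiniteMeasure μ]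
    {s s' C : ℝ} (hs' : 0 ≤ s') (hss : s' ≤ s)
    (hC : ∀ ξ : EuclideanSpace ℝ (Fin d), ‖ξ‖ ^ (s / 2) * ‖mft μ ξ‖ ≤ C) :
    ∀ ξ : EuclideanSpace ℝ (Fin d),
      ‖ξ‖ ^ (s' / 2) * ‖mft μ ξ‖ ≤ max C (μ Set.univ).toReal := by
  intro ξ
  have habs : (0:ℝ) ≤ ‖mft μ ξ‖ := norm_nonneg _
  rcases le_total ‖ξ‖ 1 with h | h
  · refine le_trans ?_ (le_max_right _ _)
    have h1 : ‖ξ‖ ^ (s' / 2) ≤ 1 := Real.rpow_le_one (norm_nonneg _) h (by linarith)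
    have h2 := mft_abs_le μ ξ
    nlinarith [Real.rpow_nonneg (norm_nonneg ξ) (s' / 2)]
  · refine le_trans ?_ (le_max_left _ _)
    have h1 : ‖ξ‖ ^ (s' / 2) ≤ ‖ξ‖ ^ (s / 2) :=
      Real.rpow_le_rpow_of_exponent_le h (by linarith)
    nlinarith [hC ξ]

/-! ### Gaussian measure -/

noncomputable def gdens {m : ℕ} (v : EuclideanSpace ℝ (Fin m)) : ℝ := rexp (-π * ‖v‖^2)

noncomputable def gmeas (m : ℕ) : Measure (EuclideanSpace ℝ (Fin m)) :=
  volume.withDensity fun v => ((gdens v).toNNReal : ENNReal)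

lemma gauss_int {m : ℕ} : Integrable (fun v : EuclideanSpace ℝ (Fin m) => gdens v) := by
  have h := GaussianFourier.integrable_cexp_neg_mul_sq_norm_add
    (V := EuclideanSpace ℝ (Fin m)) (b := (π:ℂ)) (by simpa using Real.pi_pos) 0 0
  refine h.re.congr (Filter.Eventually.of_forall fun v => ?_)
  simp [gdens, ← Complex.ofReal_exp]
  norm_cast

instance {m : ℕ} : IsFiniteMeasure (gmeas m) :=
  isFiniteMeasure_withDensity_ofReal gauss_int.hasFiniteIntegral

lemma gdens_meas {m : ℕ} :
    Measurable fun v : EuclideanSpace ℝ (Fin m) => (gdens v).toNNReal := by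
  apply measurable_real_toNNReal.comp
  apply Measurable.comp Real.measurable_exp
  exact (continuous_const.mul ((continuous_norm).pow 2)).measurable

open FourierTransform in
lemma mft_gmeas {m : ℕ} (ξ : EuclideanSpace ℝ (Fin m)) :
    mft (gmeas m) ξ = Complex.exp (-(π:ℂ) * ‖ξ‖^2) := by
  have h1 : mft (gmeas m) ξ = 𝓕 (fun v : EuclideanSpace ℝ (Fin m) =>
      Complex.exp (-(π:ℂ) * ‖v‖^2)) ξ := by
    rw [Real.fourier_eq', mft, gmeas,
      integral_withDensity_eq_integral_smul gdens_meas]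
    congr 1
    ext v
    simp only [gdens]
    rw [NNReal.smul_def, Real.coe_toNNReal _ (le_of_lt (Real.exp_pos _))]
    rw [smul_eq_mul, Complex.real_smul]
    push_cast [Complex.ofReal_exp]
    ring
  rw [h1, fourier_gaussian_innerProductSpace (by simpa using Real.pi_pos) ξ]
  have hπ : (π:ℂ) ≠ 0 := by norm_cast; exact Real.pi_ne_zero
  rw [div_self hπ, Complex.one_cpow, one_mul]
  congr 1
  field_simp

lemma abs_mft_gmeas {m : ℕ} (ξ : EuclideanSpace ℝ (Fin m)) :
    ‖mft (gmeas m) ξ‖ = rexp (-π * ‖ξ‖^2) := by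
  have h : -(π:ℂ) * (‖ξ‖:ℂ)^2 = ((-π * ‖ξ‖^2 : ℝ) : ℂ) := by push_cast; ring
  rw [mft_gmeas, h, Complex.norm_exp, Complex.ofReal_re]

lemma gmeas_univ {m : ℕ} : gmeas m Set.univ = 1 := by
  rw [gmeas, withDensity_apply _ MeasurableSet.univ, Measure.restrict_univ]
  have h := ofReal_integral_eq_lintegral_ofReal (gauss_int (m := m))
    (Filter.Eventually.of_forall fun v => (Real.exp_pos _).le)
  have h2 : ∫ v : EuclideanSpace ℝ (Fin m), gdens v = 1 := by
    simp only [gdens]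
    rw [GaussianFourier.integral_rexp_neg_mul_sq_norm Real.pi_pos]
    rw [div_self Real.pi_ne_zero, Real.one_rpow]
  rw [h2] at h
  simp only [ENNReal.ofReal] at h
  rw [← h]
  norm_num

/-! ### The product identification -/

noncomputable def prodHomeo (n m : ℕ) :
    (EuclideanSpace ℝ (Fin n) × EuclideanSpace ℝ (Fin m)) ≃ₜ EuclideanSpace ℝ (Fin (n + m)) :=
  (((EuclideanSpace.equiv (Fin n) ℝ).toHomeomorph.prodCongr
      (EuclideanSpace.equiv (Fin m) ℝ).toHomeomorph).trans
    (Fin.appendHomeomorph n m)).trans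
    (EuclideanSpace.equiv (Fin (n + m)) ℝ).toHomeomorph.symm

lemma prodMap_eq (n m : ℕ) : prodMap n m = ⇑(prodHomeo n m) := rfl

noncomputable def proj1 {n m : ℕ} (z : EuclideanSpace ℝ (Fin (n + m))) :
    EuclideanSpace ℝ (Fin n) :=
  (EuclideanSpace.equiv (Fin n) ℝ).symm fun i => z (Fin.castAdd m i)

noncomputable def proj2 {n m : ℕ} (z : EuclideanSpace ℝ (Fin (n + m))) :
    EuclideanSpace ℝ (Fin m) :=
  (EuclideanSpace.equiv (Fin m) ℝ).symm fun i => z (Fin.natAdd n i)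

lemma prodMap_proj {n m : ℕ} (z : EuclideanSpace ℝ (Fin (n + m))) :
    prodMap n m (proj1 z, proj2 z) = z := by
  apply (EuclideanSpace.equiv (Fin (n+m)) ℝ).injective
  rw [prodMap, ContinuousLinearEquiv.apply_symm_apply]
  funext j
  induction j using Fin.addCases with
  | left i => simp [proj1, Fin.append_left]
  | right i => simp [proj2, Fin.append_right]

lemma proj1_prodMap {n m : ℕ} (x : EuclideanSpace ℝ (Fin n)) (y : EuclideanSpace ℝ (Fin m)) :
    proj1 (prodMap n m (x, y)) = x := by
  have h := prodMap_proj (prodMap n m (x, y))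
  rw [prodMap_eq] at h
  have := (prodHomeo n m).injective h
  exact congrArg Prod.fst this

lemma inner_prodMap {n m : ℕ} (x a : EuclideanSpace ℝ (Fin n))
    (y b : EuclideanSpace ℝ (Fin m)) :
    (inner ℝ (prodMap n m (x, y)) (prodMap n m (a, b)) : ℝ) = inner ℝ x a + inner ℝ y b := by
  simp only [PiLp.inner_apply, RCLike.inner_apply, conj_trivial, prodMap]
  rw [Fin.sum_univ_add]
  congr 1 <;> apply Finset.sum_congr rfl <;> intro i _ <;>
    simp [Fin.append_left, Fin.append_right]

lemma norm_prodMap_sq {n m : ℕ} (x : EuclideanSpace ℝ (Fin n))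
    (y : EuclideanSpace ℝ (Fin m)) :
    ‖prodMap n m (x, y)‖^2 = ‖x‖^2 + ‖y‖^2 := by
  have h := inner_prodMap x x y y
  rw [real_inner_self_eq_norm_sq, real_inner_self_eq_norm_sq, real_inner_self_eq_norm_sq] at h
  exact h

lemma norm_le_proj {n m : ℕ} (z : EuclideanSpace ℝ (Fin (n + m))) :
    ‖z‖ ≤ ‖proj1 z‖ + ‖proj2 z‖ := by
  have h : ‖z‖^2 ≤ (‖proj1 z‖ + ‖proj2 z‖)^2 := by
    rw [← prodMap_proj z, norm_prodMap_sq, prodMap_proj z]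
    nlinarith [norm_nonneg (proj1 z), norm_nonneg (proj2 z)]
  nlinarith [norm_nonneg z, norm_nonneg (proj1 z), norm_nonneg (proj2 z)]

lemma norm_prodMap_zero {n m : ℕ} (ξ : EuclideanSpace ℝ (Fin n)) :
    ‖prodMap n m (ξ, (0 : EuclideanSpace ℝ (Fin m)))‖ = ‖ξ‖ := by
  have h := norm_prodMap_sq ξ (0 : EuclideanSpace ℝ (Fin m))
  rw [norm_zero] at h
  nlinarith [norm_nonneg (prodMap n m (ξ, (0 : EuclideanSpace ℝ (Fin m)))), norm_nonneg ξ]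

lemma mft_map_prod {n m : ℕ} (μ : Measure (EuclideanSpace ℝ (Fin n)))
    (ν : Measure (EuclideanSpace ℝ (Fin m))) [IsFiniteMeasure μ] [IsFiniteMeasure ν]
    (ζ : EuclideanSpace ℝ (Fin (n + m))) :
    mft ((μ.prod ν).map (prodMap n m)) ζ = mft μ (proj1 ζ) * mft ν (proj2 ζ) := by
  rw [mft, prodMap_eq, integral_map ((prodHomeo n m).continuous.aemeasurable)
      ((mft_kernel_cont ζ).aestronglyMeasurable)]
  have key : ∀ p : EuclideanSpace ℝ (Fin n) × EuclideanSpace ℝ (Fin m),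
      Complex.exp (((-2 * Real.pi * inner ℝ (prodMap n m p) ζ : ℝ) : ℂ) * Complex.I)
        = Complex.exp (((-2 * Real.pi * inner ℝ p.1 (proj1 ζ) : ℝ) : ℂ) * Complex.I)
          * Complex.exp (((-2 * Real.pi * inner ℝ p.2 (proj2 ζ) : ℝ) : ℂ) * Complex.I) := by
    intro p
    rw [← Complex.exp_add]
    congr 1
    have h : (inner ℝ (prodMap n m p) ζ : ℝ)
        = inner ℝ p.1 (proj1 ζ) + inner ℝ p.2 (proj2 ζ) := by
      conv_lhs => rw [← prodMap_proj ζ, show p = (p.1, p.2) from rfl, inner_prodMap]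
    rw [h]
    push_cast
    ring
  simp_rw [prodMap_eq] at key ⊢
  calc (∫ p, Complex.exp (((-2 * Real.pi * inner ℝ (prodHomeo n m p) ζ : ℝ) : ℂ) * Complex.I)
        ∂(μ.prod ν))
      = ∫ p : EuclideanSpace ℝ (Fin n) × EuclideanSpace ℝ (Fin m),
          (Complex.exp (((-2 * Real.pi * inner ℝ p.1 (proj1 ζ) : ℝ) : ℂ) * Complex.I)
          * Complex.exp (((-2 * Real.pi * inner ℝ p.2 (proj2 ζ) : ℝ) : ℂ) * Complex.I))
          ∂(μ.prod ν) :=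
        integral_congr_ae (Filter.Eventually.of_forall key)
    _ = _ := by
        rw [integral_prod_mul (μ := μ) (ν := ν)
          (f := fun x => Complex.exp (((-2 * Real.pi * inner ℝ x (proj1 ζ) : ℝ) : ℂ) * Complex.I))
          (g := fun y => Complex.exp (((-2 * Real.pi * inner ℝ y (proj2 ζ) : ℝ) : ℂ) * Complex.I))]
        rfl

lemma proj1_continuous {n m : ℕ} : Continuous (proj1 (n := n) (m := m)) := by
  refine (EuclideanSpace.equiv (Fin n) ℝ).symm.continuous.comp ?_
  refine continuous_pi fun i => ?_
  exact (continuous_apply (Fin.castAdd m i)).comp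
    (PiLp.continuous_ofLp 2 fun _ : Fin (n + m) => ℝ)

lemma mft_map_proj1 {n m : ℕ} (μ : Measure (EuclideanSpace ℝ (Fin (n + m))))
    [IsFiniteMeasure μ] (ξ : EuclideanSpace ℝ (Fin n)) :
    mft (μ.map proj1) ξ = mft μ (prodMap n m (ξ, 0)) := by
  rw [mft, integral_map (proj1_continuous.aemeasurable)
      ((mft_kernel_cont ξ).aestronglyMeasurable), mft]
  refine integral_congr_ae (Filter.Eventually.of_forall fun z => ?_)
  have h : (inner ℝ z (prodMap n m (ξ, (0 : EuclideanSpace ℝ (Fin m)))) : ℝ)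
      = inner ℝ (proj1 z) ξ := by
    conv_lhs => rw [← prodMap_proj z, inner_prodMap]
    simp
  show Complex.exp (((-2 * Real.pi * inner ℝ (proj1 z) ξ : ℝ) : ℂ) * Complex.I)
      = Complex.exp (((-2 * Real.pi * inner ℝ z (prodMap n m (ξ, 0)) : ℝ) : ℂ) * Complex.I)
  rw [h]

lemma gauss_decay {a : ℝ} (ha : 0 ≤ a) (t : ℝ) (ht : 0 ≤ t) :
    t ^ a * rexp (-π * t^2) ≤ max 1 (rexp (a^2/4)) := by
  rcases le_total t 1 with h | h
  · refine le_trans ?_ (le_max_left _ _)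
    have h1 : t ^ a ≤ 1 := Real.rpow_le_one ht h ha
    have h2 : rexp (-π * t^2) ≤ 1 := by
      rw [Real.exp_le_one_iff]
      nlinarith [Real.pi_pos, sq_nonneg t]
    nlinarith [Real.rpow_nonneg ht a, Real.exp_pos (-π * t^2)]
  · refine le_trans ?_ (le_max_right _ _)
    have h0 : (0:ℝ) < t := lt_of_lt_of_le one_pos h
    have h1 : t ^ a ≤ rexp (a * t) := by
      rw [Real.rpow_def_of_pos h0, Real.exp_le_exp]
      have := Real.log_le_sub_one_of_pos h0
      nlinarith
    calc t ^ a * rexp (-π * t^2) ≤ rexp (a * t) * rexp (-π * t^2) := by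
          have := Real.exp_pos (-π * t^2)
          nlinarith
      _ = rexp (a * t + -π * t^2) := (Real.exp_add _ _).symm
      _ ≤ rexp (a^2/4) := by
          rw [Real.exp_le_exp]
          nlinarith [Real.pi_gt_three, sq_nonneg t, sq_nonneg (a/2 - t)]

lemma rpow_add_le {a b p : ℝ} (ha : 0 ≤ a) (hb : 0 ≤ b) (hp : 0 ≤ p) :
    (a + b) ^ p ≤ 2 ^ p * (a ^ p + b ^ p) := by
  rcases le_total a b with h | h
  · calc (a+b)^p ≤ (2*b)^p := Real.rpow_le_rpow (by linarith) (by linarith) hp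
      _ = 2^p * b^p := Real.mul_rpow (by norm_num) hb
      _ ≤ 2^p * (a^p + b^p) := by
          have h1 : 0 ≤ a ^ p := Real.rpow_nonneg ha p
          have h2 : (0:ℝ) ≤ 2 ^ p := Real.rpow_nonneg (by norm_num) p
          nlinarith
  · calc (a+b)^p ≤ (2*a)^p := Real.rpow_le_rpow (by linarith) (by linarith) hp
      _ = 2^p * a^p := Real.mul_rpow (by norm_num) ha
      _ ≤ 2^p * (a^p + b^p) := by
          have h1 : 0 ≤ b ^ p := Real.rpow_nonneg hb p
          have h2 : (0:ℝ) ≤ 2 ^ p := Real.rpow_nonneg (by norm_num) p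
          nlinarith

lemma zero_mem_Tset {d : ℕ} {B : Set (EuclideanSpace ℝ (Fin d))} (hB : IsClosed B)
    (hne : B.Nonempty) : (0:ℝ) ∈ Tset B := by
  obtain ⟨x₀, hx₀⟩ := hne
  refine ⟨le_refl 0, Nat.cast_nonneg d, Measure.dirac x₀, inferInstance, ?_, ?_, 1, ?_⟩
  · intro h
    have := congrArg (fun μ : Measure (EuclideanSpace ℝ (Fin d)) => μ Set.univ) h
    simp at this
  · rw [Measure.dirac_apply' _ hB.measurableSet.compl]
    simp [hx₀]
  · intro ξ
    norm_num
    rw [mft, integral_dirac]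
    simp [Complex.norm_exp]

lemma prodMap_measurable {n m : ℕ} : Measurable (prodMap n m) := by
  rw [prodMap_eq]; exact (prodHomeo n m).continuous.measurable

lemma mem_Tset_prod {n m : ℕ} {S : Set (EuclideanSpace ℝ (Fin n))} (hS : IsCompact S)
    {s : ℝ} (hs : s ∈ Tset S) :
    s ∈ Tset (prodMap n m '' (S ×ˢ (Set.univ : Set (EuclideanSpace ℝ (Fin m))))) := by
  obtain ⟨hs0, hsn, μ, hfin, hμ0, hμS, C, hC⟩ := hs
  haveI := hfin
  set A := prodMap n m '' (S ×ˢ (Set.univ : Set (EuclideanSpace ℝ (Fin m)))) with hA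
  have hAclosed : IsClosed A := by
    rw [hA, prodMap_eq]
    exact (prodHomeo n m).isClosedMap _ (hS.isClosed.prod isClosed_univ)
  refine ⟨hs0, ?_, (μ.prod (gmeas m)).map (prodMap n m), inferInstance, ?_, ?_, ?_⟩
  · have : (n:ℝ) ≤ ((n + m : ℕ) : ℝ) := by push_cast; linarith [(Nat.cast_nonneg m : (0:ℝ) ≤ m)]
    linarith
  · rw [← Measure.measure_univ_ne_zero,
      Measure.map_apply prodMap_measurable MeasurableSet.univ, Set.preimage_univ,
      ← Set.univ_prod_univ, Measure.prod_prod, gmeas_univ, mul_one]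
    exact Measure.measure_univ_ne_zero.mpr hμ0
  · rw [Measure.map_apply prodMap_measurable hAclosed.measurableSet.compl]
    have hsub : prodMap n m ⁻¹' Aᶜ ⊆ Sᶜ ×ˢ (Set.univ : Set (EuclideanSpace ℝ (Fin m))) := by
      intro p hp
      refine ⟨fun hp1 => hp ?_, trivial⟩
      rw [hA]
      exact ⟨(p.1, p.2), ⟨hp1, trivial⟩, rfl⟩
    refine measure_mono_null hsub ?_
    rw [Measure.prod_prod, hμS, zero_mul]
  · refine ⟨2 ^ (s/2) * (max C 0 + (μ Set.univ).toReal * max 1 (rexp ((s/2)^2/4))), fun ξ => ?_⟩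
    rw [mft_map_prod μ (gmeas m) ξ, norm_mul]
    set p := s / 2 with hp
    have hp0 : 0 ≤ p := by rw [hp]; linarith
    set a := ‖proj1 ξ‖ with ha
    set b := ‖proj2 ξ‖ with hb
    set U := ‖mft μ (proj1 ξ)‖ with hU
    set V := ‖mft (gmeas m) (proj2 ξ)‖ with hV
    set M := (μ Set.univ).toReal with hM
    set D := max 1 (rexp (p^2/4)) with hD
    have ha0 : 0 ≤ a := norm_nonneg _
    have hb0 : 0 ≤ b := norm_nonneg _
    have hU0 : 0 ≤ U := norm_nonneg _
    have hV0 : 0 ≤ V := norm_nonneg _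
    have hUM : U ≤ M := mft_abs_le μ _
    have hM0 : 0 ≤ M := ENNReal.toReal_nonneg
    have hV1 : V ≤ 1 := by
      rw [hV, abs_mft_gmeas, Real.exp_le_one_iff]
      nlinarith [Real.pi_pos, sq_nonneg b]
    have h3 : a ^ p * U ≤ max C 0 := le_trans (hC _) (le_max_left _ _)
    have h6 : b ^ p * V ≤ D := by
      rw [hV, abs_mft_gmeas]
      exact gauss_decay hp0 b hb0
    have hD0 : 0 ≤ D := le_trans zero_le_one (le_max_left _ _)
    have h2 : ‖ξ‖ ^ p ≤ 2 ^ p * (a ^ p + b ^ p) :=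
      le_trans (Real.rpow_le_rpow (norm_nonneg _) (norm_le_proj ξ) hp0)
        (rpow_add_le ha0 hb0 hp0)
    have hap0 : 0 ≤ a ^ p := Real.rpow_nonneg ha0 p
    have hbp0 : 0 ≤ b ^ p := Real.rpow_nonneg hb0 p
    have h2p0 : (0:ℝ) ≤ 2 ^ p := Real.rpow_nonneg (by norm_num) p
    calc ‖ξ‖ ^ p * (U * V) ≤ (2 ^ p * (a ^ p + b ^ p)) * (U * V) := by
          apply mul_le_mul_of_nonneg_right h2 (mul_nonneg hU0 hV0)
      _ = 2 ^ p * ((a ^ p * U) * V + (b ^ p * V) * U) := by ring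
      _ ≤ 2 ^ p * (max C 0 * 1 + D * M) := by
          have e1 : (a ^ p * U) * V ≤ max C 0 * 1 :=
            mul_le_mul h3 hV1 hV0 (le_max_right C 0)
          have e2 : (b ^ p * V) * U ≤ D * M :=
            mul_le_mul h6 hUM hU0 hD0
          nlinarith
      _ = 2 ^ p * (max C 0 + M * D) := by ring

lemma exists_proj_measure {n m : ℕ} {S : Set (EuclideanSpace ℝ (Fin n))} (hSc : IsClosed S)
    {s : ℝ}
    (hs : s ∈ Tset (prodMap n m '' (S ×ˢ (Set.univ : Set (EuclideanSpace ℝ (Fin m)))))) :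
    ∃ ν : Measure (EuclideanSpace ℝ (Fin n)), IsFiniteMeasure ν ∧ ν ≠ 0 ∧ ν Sᶜ = 0 ∧
      ∃ C : ℝ, ∀ ξ, ‖ξ‖ ^ (s / 2) * ‖mft ν ξ‖ ≤ C := by
  obtain ⟨hs0, hsnm, μ, hfin, hμ0, hμA, C, hC⟩ := hs
  haveI := hfin
  have hmeas : Measurable (proj1 (n := n) (m := m)) := proj1_continuous.measurable
  refine ⟨μ.map proj1, ⟨by rw [Measure.map_apply hmeas MeasurableSet.univ]; exact measure_lt_top μ _⟩, ?_, ?_, C, ?_⟩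
  · rw [← Measure.measure_univ_ne_zero, Measure.map_apply hmeas MeasurableSet.univ,
      Set.preimage_univ]
    exact Measure.measure_univ_ne_zero.mpr hμ0
  · rw [Measure.map_apply hmeas hSc.measurableSet.compl]
    refine measure_mono_null ?_ hμA
    intro z hz hzA
    obtain ⟨⟨x, y⟩, ⟨hxS, -⟩, rfl⟩ := hzA
    rw [Set.mem_preimage, proj1_prodMap] at hz
    exact hz hxS
  · intro ξ
    rw [mft_map_proj1, ← norm_prodMap_zero (m := m) ξ]
    exact hC _

lemma Tset_empty {d : ℕ} : Tset (∅ : Set (EuclideanSpace ℝ (Fin d))) = ∅ := by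
  ext s
  simp only [Tset, Set.mem_setOf_eq, Set.mem_empty_iff_false, iff_false]
  rintro ⟨-, -, μ, -, hμ0, hc, -⟩
  rw [Set.compl_empty] at hc
  exact hμ0 (Measure.measure_univ_eq_zero.mp hc)

/-- For a compact `S ⊆ ℝ^n` with `dim_F S < n`, `dim_F(S × ℝ^m) = dim_F S`. -/
theorem statement13 (n m : ℕ)
    (S : Set (EuclideanSpace ℝ (Fin n)))
    (hS : IsCompact S)
    (hSd : fourierDim S < (n : ℝ)) :
    fourierDim (prodMap n m '' (S ×ˢ (Set.univ : Set (EuclideanSpace ℝ (Fin m)))))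
      = fourierDim S := by
  rcases S.eq_empty_or_nonempty with hSe | hSne
  · rw [hSe]
    rw [Set.empty_prod, Set.image_empty, fourierDim_eq, fourierDim_eq, Tset_empty, Tset_empty]
  · obtain ⟨x₀, hx₀⟩ := hSne
    have hTS0 : 0 ≤ sSup (Tset S) :=
      le_csSup (Tset_bddAbove S) (zero_mem_Tset hS.isClosed ⟨x₀, hx₀⟩)
    set A := prodMap n m '' (S ×ˢ (Set.univ : Set (EuclideanSpace ℝ (Fin m)))) with hA
    have hAclosed : IsClosed A := by
      rw [hA, prodMap_eq]
      exact (prodHomeo n m).isClosedMap _ (hS.isClosed.prod isClosed_univ)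
    have hAne : A.Nonempty := ⟨prodMap n m (x₀, 0), ⟨(x₀, 0), ⟨hx₀, trivial⟩, rfl⟩⟩
    have hTA0 : 0 ≤ sSup (Tset A) :=
      le_csSup (Tset_bddAbove A) (zero_mem_Tset hAclosed hAne)
    rw [fourierDim_eq, fourierDim_eq]
    apply le_antisymm
    · apply Real.sSup_le _ hTS0
      intro s hsA
      obtain ⟨ν, hfin, hν0, hνS, C, hC⟩ := exists_proj_measure hS.isClosed hsA
      haveI := hfin
      by_cases hsn : s ≤ (n : ℝ)
      · exact le_csSup (Tset_bddAbove S) ⟨hsA.1, hsn, ν, hfin, hν0, hνS, C, hC⟩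
      · exfalso
        push_neg at hsn
        have hn : (n : ℝ) ∈ Tset S :=
          ⟨Nat.cast_nonneg n, le_refl _, ν, hfin, hν0, hνS,
            max C (ν Set.univ).toReal, decay_mono ν (Nat.cast_nonneg n) hsn.le hC⟩
        have h := le_csSup (Tset_bddAbove S) hn
        rw [fourierDim_eq] at hSd
        linarith
    · apply Real.sSup_le _ hTA0
      intro s hsS
      exact le_csSup (Tset_bddAbove A) (mem_Tset_prod hS hsS)
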